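/- Every Vénéreau-type polynomial f = y + xQ with Q ∈ ℂ[x][v,w] is a ℂ[x]-hyperplane: ℂ[x][y,z,u]/(f) is ℂ[x]-isomorphic to a polynomial ring in two variables over ℂ[x]. -/

import Mathlib

open MvPolynomial

lemma aeval2_apply_hom {R B C : Type*} [CommRing R] [CommRing B] [CommRing C] [Algebra R B]
    [Algebra R C] (f : B →ₐ[R] C) (a b : B) (qq : MvPolynomial (Fin 2) R) :
    f (aeval ![a, b] qq) = aeval ![f a, f b] qq := by
  rw [comp_aeval_apply]
  have : (fun i => f (![a, b] i)) = ![f a, f b] := by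
    funext i
    fin_cases i <;> simp
  rw [this]

lemma aeval_sub_dvd {R A σ : Type*} [CommRing R] [CommRing A] [Algebra R A] (d : A)
    (g₁ g₂ : σ → A) (h : ∀ i, d ∣ g₁ i - g₂ i) (qq : MvPolynomial σ R) :
    d ∣ aeval g₁ qq - aeval g₂ qq := by
  induction qq using MvPolynomial.induction_on with
  | C a => simp
  | add p₁ p₂ h₁ h₂ =>
      simp only [map_add]
      convert dvd_add h₁ h₂ using 1
      ring
  | mul_X p₁ i h₁ =>
      simp only [map_mul, aeval_X]
      obtain ⟨a, ha⟩ := h₁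
      obtain ⟨b, hb⟩ := h i
      exact ⟨aeval g₁ p₁ * b + a * g₂ i, by linear_combination (aeval g₁ p₁) * hb + (g₂ i) * ha⟩

set_option maxHeartbeats 1000000 in
theorem stmt17 :
    let R := Polynomial ℂ
    let y : MvPolynomial (Fin 3) R := X 0
    let z : MvPolynomial (Fin 3) R := X 1
    let u : MvPolynomial (Fin 3) R := X 2
    let x : MvPolynomial (Fin 3) R := C Polynomial.X
    let p := y * u + z ^ 2
    let v := x * z + y * p
    let w := x ^ 2 * u - 2 * x * z * p - y * p ^ 2
    ∀ Q ∈ Algebra.adjoin R ({v, w} : Set (MvPolynomial (Fin 3) R)),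
      Nonempty ((MvPolynomial (Fin 3) R ⧸
          Ideal.span ({y + x * Q} : Set (MvPolynomial (Fin 3) R))) ≃ₐ[R]
        MvPolynomial (Fin 2) R) := by
  intro R y z u x p v w Q hQ
  have hR : R = Polynomial ℂ := rfl
  have hy : y = X 0 := rfl
  have hz : z = X 1 := rfl
  have hu : u = X 2 := rfl
  have hx : x = C Polynomial.X := rfl
  have hp : p = y * u + z ^ 2 := rfl
  have hv : v = x * z + y * p := rfl
  have hw : w = x ^ 2 * u - 2 * x * z * p - y * p ^ 2 := rfl
  clear_value y z u x p v w
  subst hy hz hu hx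
  obtain ⟨q, hq⟩ : ∃ qq : MvPolynomial (Fin 2) (Polynomial ℂ), aeval ![v, w] qq = Q := by
    have hrange : Q ∈ (aeval ![v, w] :
        MvPolynomial (Fin 2) (Polynomial ℂ) →ₐ[Polynomial ℂ] MvPolynomial (Fin 3) (Polynomial ℂ)).range := by
      apply Algebra.adjoin_le _ hQ
      rintro g hg
      simp only [Set.mem_insert_iff, Set.mem_singleton_iff] at hg
      rcases hg with rfl | rfl
      · exact ⟨X 0, by simp⟩
      · exact ⟨X 1, by simp⟩
    exact hrange
  subst hq
  -- abbreviations
  set c : Polynomial ℂ := aeval ![(0 : Polynomial ℂ), 0] q with hc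
  set Qq : MvPolynomial (Fin 3) (Polynomial ℂ) := aeval ![v, w] q with hQq
  set f : MvPolynomial (Fin 3) (Polynomial ℂ) := X 0 + C Polynomial.X * Qq with hf
  set s : MvPolynomial (Fin 3) (Polynomial ℂ) := X 1 - Qq * p with hs
  set t : MvPolynomial (Fin 3) (Polynomial ℂ) :=
    C Polynomial.X * X 2 - 2 * X 1 * p + Qq * p ^ 2 with ht
  -- T2-side
  set Qp : MvPolynomial (Fin 2) (Polynomial ℂ) :=
    aeval ![(C Polynomial.X : MvPolynomial (Fin 2) (Polynomial ℂ)) * X 0,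
      (C Polynomial.X : MvPolynomial (Fin 2) (Polynomial ℂ)) * X 1] q with hQp
  set Mp : MvPolynomial (Fin 2) (Polynomial ℂ) :=
    X 1 + 2 * X 0 * (X 0 ^ 2 - Qp * X 1) + Qp * (X 0 ^ 2 - Qp * X 1) ^ 2 with hMp
  set mp : MvPolynomial (Fin 2) (Polynomial ℂ) :=
    X 1 + 2 * X 0 * (X 0 ^ 2 - C c * X 1) + C c * (X 0 ^ 2 - C c * X 1) ^ 2 with hmp
  have hdvd : (C Polynomial.X : MvPolynomial (Fin 2) (Polynomial ℂ)) ∣ Qp - C c := by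
    have h0 : (C c : MvPolynomial (Fin 2) (Polynomial ℂ)) = aeval ![0, 0] q := by
      have h := aeval2_apply_hom
        (Algebra.ofId (Polynomial ℂ) (MvPolynomial (Fin 2) (Polynomial ℂ))) (0 : Polynomial ℂ) 0 q
      simp only [map_zero] at h
      rw [hc, ← h, Algebra.ofId_apply, algebraMap_eq]
    rw [h0, hQp]
    apply aeval_sub_dvd
    intro i
    fin_cases i
    · simpa using dvd_mul_right (C Polynomial.X : MvPolynomial (Fin 2) (Polynomial ℂ)) (X 0)
    · simpa using dvd_mul_right (C Polynomial.X : MvPolynomial (Fin 2) (Polynomial ℂ)) (X 1)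
  obtain ⟨DD, hDD⟩ := hdvd
  set N : MvPolynomial (Fin 2) (Polynomial ℂ) :=
    DD * (-(2 * X 0 * X 1) + (X 0 ^ 2 - Qp * X 1) ^ 2
      - C c * ((X 0 ^ 2 - Qp * X 1) + (X 0 ^ 2 - C c * X 1)) * X 1) with hN0
  have hN : Mp = mp + C Polynomial.X * N := by
    rw [hMp, hmp, hN0]
    linear_combination (-(2 * X 0 * X 1) + (X 0 ^ 2 - Qp * X 1) ^ 2
      - C c * ((X 0 ^ 2 - Qp * X 1) + (X 0 ^ 2 - C c * X 1)) * X 1) * hDD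
  set SS : MvPolynomial (Fin 2) (Polynomial ℂ) :=
    C c ^ 2 * (C Polynomial.X * X 1) - X 0 - C c * X 0 ^ 2 with hSS
  set TT : MvPolynomial (Fin 2) (Polynomial ℂ) :=
    C Polynomial.X * X 1 + 2 * X 0 ^ 3 - 2 * C c * X 0 * (C Polynomial.X * X 1)
      + C c ^ 3 * (C Polynomial.X * X 1) ^ 2 - 2 * C c ^ 2 * (C Polynomial.X * X 1) * X 0 ^ 2
      + C c * X 0 ^ 4 with hTT
  set kk : MvPolynomial (Fin 2) (Polynomial ℂ) :=
    aeval ![(C Polynomial.X : MvPolynomial (Fin 2) (Polynomial ℂ)) * SS,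
      (C Polynomial.X : MvPolynomial (Fin 2) (Polynomial ℂ)) * TT] q with hkk
  set NT : MvPolynomial (Fin 2) (Polynomial ℂ) := aeval ![SS, TT] N with hNT
  have key1 : TT + 2 * SS * (SS ^ 2 - kk * TT) + kk * (SS ^ 2 - kk * TT) ^ 2
      = C Polynomial.X * X 1 + C Polynomial.X * NT := by
    have h1 := congrArg (aeval (R := Polynomial ℂ) ![SS, TT]) hN
    rw [hMp, hmp, hQp] at h1
    simp only [map_add, map_sub, map_mul, map_pow, map_ofNat, aeval_X, aeval_C, algebraMap_eq,
      Matrix.cons_val_zero, Matrix.cons_val_one, Matrix.head_cons, aeval2_apply_hom] at h1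
    rw [← hkk, ← hNT] at h1
    rw [hSS, hTT] at h1 ⊢
    linear_combination h1
  set Fy : MvPolynomial (Fin 2) (Polynomial ℂ) := -(C Polynomial.X * kk) with hFy
  set Fz : MvPolynomial (Fin 2) (Polynomial ℂ) := SS + kk * (SS ^ 2 - kk * TT) with hFz
  set Fu : MvPolynomial (Fin 2) (Polynomial ℂ) := X 1 + NT with hFu
  set phi0 : MvPolynomial (Fin 3) (Polynomial ℂ) →ₐ[Polynomial ℂ]
      MvPolynomial (Fin 2) (Polynomial ℂ) := aeval ![Fy, Fz, Fu] with hphi0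
  have hA0 : phi0 (X 0) = Fy := by rw [hphi0]; simp
  have hA1 : phi0 (X 1) = Fz := by rw [hphi0]; simp
  have hA2 : phi0 (X 2) = Fu := by rw [hphi0]; simp
  have hAC : ∀ r : Polynomial ℂ, phi0 (C r) = C r := by
    intro r; rw [hphi0]; simp [algebraMap_eq]
  have hphip : phi0 p = SS ^ 2 - kk * TT := by
    rw [hp, map_add, map_mul, map_pow, hA0, hA1, hA2, hFy, hFz, hFu]
    linear_combination kk * key1
  have hphiv : phi0 v = C Polynomial.X * SS := by
    rw [hv, map_add, map_mul, map_mul, hAC, hA1, hA0, hphip, hFy, hFz]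
    ring
  have hphiw : phi0 w = C Polynomial.X * TT := by
    rw [hw]
    simp only [map_sub, map_mul, map_pow, map_ofNat, hA0, hA1, hA2, hphip, hAC]
    rw [hFy, hFz, hFu]
    linear_combination (-(C Polynomial.X : MvPolynomial (Fin 2) (Polynomial ℂ))) * key1
  have hphiQ : phi0 Qq = kk := by
    rw [hQq, aeval2_apply_hom phi0 v w q, hphiv, hphiw, hkk]
  have hphif : phi0 f = 0 := by
    rw [hf, map_add, map_mul, hAC, hA0, hphiQ, hFy]
    ring
  have hphis : phi0 s = SS := by
    rw [hs, map_sub, map_mul, hA1, hphiQ, hphip, hFz]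
    ring
  have hphit : phi0 t = TT := by
    rw [ht]
    simp only [map_add, map_sub, map_mul, map_pow, map_ofNat, hA1, hA2, hphiQ, hphip, hAC]
    rw [hFz, hFu]
    linear_combination -key1
  set g1 : MvPolynomial (Fin 3) (Polynomial ℂ) := C c ^ 2 * t - s - C c * s ^ 2 with hg1
  set g2 : MvPolynomial (Fin 3) (Polynomial ℂ) := X 2 - aeval ![s, t] N with hg2
  have hBZ : phi0 g1 = X 0 := by
    rw [hg1, map_sub, map_sub, map_mul, map_mul, map_pow, map_pow, hAC, hphis, hphit]
    rw [hSS, hTT]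
    ring
  have hBU : phi0 g2 = X 1 := by
    rw [hg2, map_sub, hA2, aeval2_apply_hom phi0 s t N, hphis, hphit, ← hNT, hFu]
    ring
  -- quotient side
  set I : Ideal (MvPolynomial (Fin 3) (Polynomial ℂ)) := Ideal.span {f} with hI
  set piA : MvPolynomial (Fin 3) (Polynomial ℂ) →ₐ[Polynomial ℂ]
      (MvPolynomial (Fin 3) (Polynomial ℂ) ⧸ I) := Ideal.Quotient.mkₐ (Polynomial ℂ) I with hpiA
  have hpif : piA f = 0 := by
    rw [hpiA]
    simp only [Ideal.Quotient.mkₐ_eq_mk]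
    rw [Ideal.Quotient.eq_zero_iff_mem, hI]
    exact Ideal.subset_span rfl
  have idv : v = C Polynomial.X * s + p * f := by rw [hv, hs, hf]; ring
  have idw : w = C Polynomial.X * t - p ^ 2 * f := by rw [hw, ht, hf]; ring
  have idp : p = s ^ 2 - Qq * t + X 2 * f := by rw [hs, ht, hf, hp]; ring
  have idxu : C Polynomial.X * X 2 = t + 2 * X 1 * p - Qq * p ^ 2 := by rw [ht]; ring
  have idz : (X 1 : MvPolynomial (Fin 3) (Polynomial ℂ)) = s + Qq * p := by rw [hs]; ring
  have hVA : piA v = piA (C Polynomial.X) * piA s := by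
    have h := congrArg piA idv
    rw [map_add, map_mul, map_mul, hpif] at h
    linear_combination h
  have hWA : piA w = piA (C Polynomial.X) * piA t := by
    have h := congrArg piA idw
    rw [map_sub, map_mul, map_mul, map_pow, hpif] at h
    linear_combination h
  have hPA : piA p = piA s ^ 2 - piA Qq * piA t := by
    have h := congrArg piA idp
    rw [map_add, map_sub, map_mul, map_mul, map_pow, hpif] at h
    linear_combination h
  have hQA : piA Qq = aeval ![piA (C Polynomial.X) * piA s, piA (C Polynomial.X) * piA t] q := by
    rw [hQq, aeval2_apply_hom (R := Polynomial ℂ) (B := MvPolynomial (Fin 3) (Polynomial ℂ)) (C := MvPolynomial (Fin 3) (Polynomial ℂ) ⧸ I) piA v w q, hVA, hWA]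
  have hxuA : piA (C Polynomial.X) * piA (X 2)
      = piA t + 2 * piA (X 1) * piA p - piA Qq * piA p ^ 2 := by
    have h := congrArg piA idxu
    simp only [map_add, map_sub, map_mul, map_pow, map_ofNat] at h
    exact h
  have hzA : piA (X 1) = piA s + piA Qq * piA p := by
    have h := congrArg piA idz
    simp only [map_add, map_mul] at h
    exact h
  set NA : MvPolynomial (Fin 3) (Polynomial ℂ) ⧸ I := aeval ![piA s, piA t] N with hNA
  have hNA2 : piA (aeval ![s, t] N) = NA := by
    rw [aeval2_apply_hom (R := Polynomial ℂ) (B := MvPolynomial (Fin 3) (Polynomial ℂ)) (C := MvPolynomial (Fin 3) (Polynomial ℂ) ⧸ I) piA s t N, hNA]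
  have keyA : piA t + 2 * piA s * (piA s ^ 2 - piA Qq * piA t)
        + piA Qq * (piA s ^ 2 - piA Qq * piA t) ^ 2
      = piA t + 2 * piA s * (piA s ^ 2 - piA (C c) * piA t)
        + piA (C c) * (piA s ^ 2 - piA (C c) * piA t) ^ 2
        + piA (C Polynomial.X) * NA := by
    have h := congrArg piA (congrArg (aeval (R := Polynomial ℂ) ![s, t]) hN)
    rw [hMp, hmp, hQp] at h
    simp only [map_add, map_sub, map_mul, map_pow, map_ofNat, aeval_X, aeval_C, algebraMap_eq,
      Matrix.cons_val_zero, Matrix.cons_val_one, Matrix.head_cons, aeval2_apply_hom, aeval2_apply_hom (R := Polynomial ℂ) (B := MvPolynomial (Fin 3) (Polynomial ℂ)) (C := MvPolynomial (Fin 3) (Polynomial ℂ) ⧸ I) piA] at h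
    rw [← hQA] at h
    rw [← hNA] at h
    linear_combination h
  have e1 : piA (C Polynomial.X) * piA (X 2)
      = piA t + 2 * piA s * piA p + piA Qq * piA p ^ 2 := by
    linear_combination hxuA + 2 * piA p * hzA
  rw [hPA] at e1
  have hxU1 : piA (C Polynomial.X) * (piA (X 2) - NA)
      = piA t + 2 * piA s * (piA s ^ 2 - piA (C c) * piA t)
        + piA (C c) * (piA s ^ 2 - piA (C c) * piA t) ^ 2 := by
    linear_combination e1 + keyA
  set psi0 : MvPolynomial (Fin 2) (Polynomial ℂ) →ₐ[Polynomial ℂ]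
      MvPolynomial (Fin 3) (Polynomial ℂ) := aeval ![g1, g2] with hpsi0
  have hB0 : psi0 (X 0) = g1 := by rw [hpsi0]; simp
  have hB1 : psi0 (X 1) = g2 := by rw [hpsi0]; simp
  have hBC : ∀ r : Polynomial ℂ, psi0 (C r) = C r := by
    intro r; rw [hpsi0]; simp [algebraMap_eq]
  have hpsiS : piA (psi0 SS) = piA s := by
    rw [hSS]
    simp only [map_sub, map_mul, map_pow, map_add, hB0, hB1, hBC]
    rw [hg1, hg2]
    simp only [map_sub, map_mul, map_pow, map_add, hNA2]
    linear_combination (piA (C c)) ^ 2 * hxU1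
  have hpsiT : piA (psi0 TT) = piA t := by
    rw [hTT]
    simp only [map_sub, map_mul, map_pow, map_add, map_ofNat, hB0, hB1, hBC]
    rw [hg1, hg2]
    simp only [map_sub, map_mul, map_pow, map_add, map_ofNat, hNA2]
    linear_combination (1 - 2 * piA (C c) * (piA (C c) ^ 2 * piA t - piA s - piA (C c) * piA s ^ 2)
      - 2 * piA (C c) ^ 2 * (piA (C c) ^ 2 * piA t - piA s - piA (C c) * piA s ^ 2) ^ 2
      + piA (C c) ^ 3 * (piA (C Polynomial.X) * (piA (X 2) - NA)
        + (piA t + 2 * piA s * (piA s ^ 2 - piA (C c) * piA t)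
          + piA (C c) * (piA s ^ 2 - piA (C c) * piA t) ^ 2))) * hxU1
  have hpsikk : piA (psi0 kk) = piA Qq := by
    rw [hkk, aeval2_apply_hom psi0 _ _ q, aeval2_apply_hom (R := Polynomial ℂ) (B := MvPolynomial (Fin 3) (Polynomial ℂ)) (C := MvPolynomial (Fin 3) (Polynomial ℂ) ⧸ I) piA _ _ q]
    have e3 : piA (psi0 (C Polynomial.X * SS)) = piA (C Polynomial.X) * piA s := by
      rw [map_mul, map_mul, hBC, hpsiS]
    have e4 : piA (psi0 (C Polynomial.X * TT)) = piA (C Polynomial.X) * piA t := by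
      rw [map_mul, map_mul, hBC, hpsiT]
    rw [e3, e4, ← hQA]
  have hrel : piA (X 0) + piA (C Polynomial.X) * piA Qq = 0 := by
    have h := hpif
    rw [hf, map_add, map_mul] at h
    exact h
  have hCy : piA (psi0 Fy) = piA (X 0) := by
    rw [hFy]
    simp only [map_neg, map_mul, hBC]
    rw [hpsikk]
    linear_combination -hrel
  have hCz : piA (psi0 Fz) = piA (X 1) := by
    rw [hFz]
    simp only [map_add, map_sub, map_mul, map_pow]
    rw [hpsiS, hpsiT, hpsikk]
    linear_combination -hzA - piA Qq * hPA
  have hCu : piA (psi0 Fu) = piA (X 2) := by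
    rw [hFu]
    simp only [map_add, hB1]
    rw [hNT, aeval2_apply_hom psi0 SS TT N, aeval2_apply_hom (R := Polynomial ℂ) (B := MvPolynomial (Fin 3) (Polynomial ℂ)) (C := MvPolynomial (Fin 3) (Polynomial ℂ) ⧸ I) piA _ _ N, hpsiS, hpsiT, ← hNA,
      hg2, map_sub, hNA2]
    ring
  have hker : ∀ a ∈ I, phi0 a = 0 := by
    intro a ha
    rw [hI, Ideal.mem_span_singleton] at ha
    obtain ⟨b, rfl⟩ := ha
    rw [map_mul, hphif, zero_mul]
  set phi' := Ideal.Quotient.liftₐ I phi0 hker with hphi'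
  set psi' := piA.comp psi0 with hpsi'
  have hlift : ∀ g : MvPolynomial (Fin 3) (Polynomial ℂ), phi' (piA g) = phi0 g := by
    intro g
    rw [hphi', hpiA]
    simp only [Ideal.Quotient.liftₐ_apply, Ideal.Quotient.mkₐ_eq_mk, Ideal.Quotient.lift_mk,
      AlgHom.coe_toRingHom]
    rfl
  have h1 : phi'.comp psi' = AlgHom.id (Polynomial ℂ) (MvPolynomial (Fin 2) (Polynomial ℂ)) := by
    apply MvPolynomial.algHom_ext
    intro i
    fin_cases i
    · show phi' (psi' (X 0)) = X 0
      rw [hpsi', AlgHom.comp_apply, hB0, hlift, hBZ]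
    · show phi' (psi' (X 1)) = X 1
      rw [hpsi', AlgHom.comp_apply, hB1, hlift, hBU]
  have h2 : psi'.comp phi'
      = AlgHom.id (Polynomial ℂ) (MvPolynomial (Fin 3) (Polynomial ℂ) ⧸ I) := by
    apply Ideal.Quotient.algHom_ext (R₁ := Polynomial ℂ)
    apply MvPolynomial.algHom_ext
    intro i
    fin_cases i
    · show psi' (phi' (Ideal.Quotient.mkₐ (Polynomial ℂ) I (X 0)))
        = Ideal.Quotient.mkₐ (Polynomial ℂ) I (X 0)
      rw [← hpiA, hlift, hA0, hpsi', AlgHom.comp_apply, hCy]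
    · show psi' (phi' (Ideal.Quotient.mkₐ (Polynomial ℂ) I (X 1)))
        = Ideal.Quotient.mkₐ (Polynomial ℂ) I (X 1)
      rw [← hpiA, hlift, hA1, hpsi', AlgHom.comp_apply, hCz]
    · show psi' (phi' (Ideal.Quotient.mkₐ (Polynomial ℂ) I (X 2)))
        = Ideal.Quotient.mkₐ (Polynomial ℂ) I (X 2)
      rw [← hpiA, hlift, hA2, hpsi', AlgHom.comp_apply, hCu]
  exact ⟨AlgEquiv.ofAlgHom phi' psi' h1 h2⟩
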